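/- Let f : ℝ^d → ℝ be twice continuously differentiable and suppose ‖∇²f(w)‖ ≤ L₀ + L₁‖∇f(w)‖ for all w (operator norm), with L₀, L₁ > 0. Then for all w, w' ∈ ℝ^d, ‖∇f(w')-∇f(w)‖ ≤ (L₀ + L₁·∫₀¹ ‖∇f(θw'+(1-θ)w)‖ dθ)·‖w'-w‖. -/

import Mathlib

open intervalIntegral InnerProductSpace

theorem hessian_bound_implies_integral_condition {d : ℕ}
    (f : EuclideanSpace ℝ (Fin d) → ℝ) (hf : ContDiff ℝ 2 f)
    (L₀ L₁ : ℝ) (hL₀ : 0 < L₀) (hL₁ : 0 < L₁)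
    (hhess : ∀ w : EuclideanSpace ℝ (Fin d),
      ‖fderiv ℝ (gradient f) w‖ ≤ L₀ + L₁ * ‖gradient f w‖) :
    ∀ w w' : EuclideanSpace ℝ (Fin d),
      ‖gradient f w' - gradient f w‖ ≤
        (L₀ + L₁ * ∫ θ in (0:ℝ)..1, ‖gradient f (θ • w' + (1 - θ) • w)‖) * ‖w' - w‖ := by
  intro w w'
  have hgrad : ContDiff ℝ 1 (gradient f) := by
    have h1 : ContDiff ℝ 1 (fderiv ℝ f) := hf.fderiv_right (by norm_num)
    exact (toDual ℝ (EuclideanSpace ℝ (Fin d))).symm.contDiff.comp h1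
  set v := w' - w with hv
  set γ : ℝ → EuclideanSpace ℝ (Fin d) := fun θ => w + θ • v with hγ
  have hγeq : ∀ θ : ℝ, γ θ = θ • w' + (1 - θ) • w := by
    intro θ; simp [hγ, hv, smul_sub, sub_smul]; abel
  have hderiv : ∀ θ : ℝ, HasDerivAt (fun t => gradient f (γ t))
      (fderiv ℝ (gradient f) (γ θ) v) θ := by
    intro θ
    have h1 : HasDerivAt γ v θ := by
      simpa [hγ] using ((hasDerivAt_id θ).smul_const v).const_add w
    exact ((hgrad.differentiable one_ne_zero (γ θ)).hasFDerivAt).comp_hasDerivAt θ h1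
  have hcontγ : Continuous γ := by fun_prop
  have hcont : Continuous fun θ => fderiv ℝ (gradient f) (γ θ) v :=
    ((hgrad.continuous_fderiv one_ne_zero).comp hcontγ).clm_apply continuous_const
  have hFTC : gradient f (γ 1) - gradient f (γ 0) =
      ∫ θ in (0:ℝ)..1, fderiv ℝ (gradient f) (γ θ) v := by
    rw [intervalIntegral.integral_eq_sub_of_hasDerivAt (fun θ _ => hderiv θ)
      (hcont.intervalIntegrable 0 1)]
  have hγ0 : γ 0 = w := by simp [hγ]
  have hγ1 : γ 1 = w' := by simp [hγ, hv]
  have hnormint : Continuous fun θ : ℝ => ‖gradient f (γ θ)‖ :=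
    ((hgrad.continuous).comp hcontγ).norm
  have key : ‖gradient f w' - gradient f w‖ ≤
      ∫ θ in (0:ℝ)..1, (L₀ + L₁ * ‖gradient f (γ θ)‖) * ‖v‖ := by
    rw [← hγ0, ← hγ1, hFTC]
    calc ‖∫ θ in (0:ℝ)..1, fderiv ℝ (gradient f) (γ θ) v‖
        ≤ ∫ θ in (0:ℝ)..1, ‖fderiv ℝ (gradient f) (γ θ) v‖ :=
          intervalIntegral.norm_integral_le_integral_norm zero_le_one
      _ ≤ ∫ θ in (0:ℝ)..1, (L₀ + L₁ * ‖gradient f (γ θ)‖) * ‖v‖ := by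
          apply intervalIntegral.integral_mono_on zero_le_one
            (hcont.norm.intervalIntegrable 0 1)
            (((continuous_const.add (continuous_const.mul hnormint)).mul
              continuous_const).intervalIntegrable 0 1)
          intro θ _
          calc ‖fderiv ℝ (gradient f) (γ θ) v‖
              ≤ ‖fderiv ℝ (gradient f) (γ θ)‖ * ‖v‖ := (fderiv ℝ (gradient f) (γ θ)).le_opNorm v
            _ ≤ (L₀ + L₁ * ‖gradient f (γ θ)‖) * ‖v‖ :=
                mul_le_mul_of_nonneg_right (hhess _) (norm_nonneg _)
  calc ‖gradient f w' - gradient f w‖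
      ≤ ∫ θ in (0:ℝ)..1, (L₀ + L₁ * ‖gradient f (γ θ)‖) * ‖v‖ := key
    _ = (L₀ + L₁ * ∫ θ in (0:ℝ)..1, ‖gradient f (γ θ)‖) * ‖v‖ := by
        rw [intervalIntegral.integral_mul_const, intervalIntegral.integral_add (g := fun θ => L₁ * ‖gradient f (γ θ)‖)
          intervalIntegrable_const ((continuous_const.mul hnormint).intervalIntegrable 0 1),
          intervalIntegral.integral_const_mul]
        simp
    _ = (L₀ + L₁ * ∫ θ in (0:ℝ)..1, ‖gradient f (θ • w' + (1 - θ) • w)‖) * ‖w' - w‖ := by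
        simp_rw [hγeq, hv]
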